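/- Let T be an (n,d)-regular rooted tree and τ a non-crossing partition. Then the number of rooted tree homomorphisms from graph(τ) to T equals n^{O(τ)} · d^{I(τ)}, where O(τ) and I(τ) are the numbers of outer and inner blocks of τ respectively. -/

import Mathlib

/-- A rooted subtree of the tree of alternating strings on alphabet `β`. -/
def IsRootedSubtree {β : Type*} (S : Set (List β)) : Prop :=
  (∀ s ∈ S, s.Chain' (· ≠ ·)) ∧ [] ∈ S ∧ ∀ s ∈ S, s.tail ∈ S

/-- Partitions of finite subsets of `ℕ`, given by their set of blocks. -/
abbrev Blocks : Type := Finset (Finset ℕ)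

/-- `π` is a non-crossing partition (of its ground set). -/
def IsNC (π : Blocks) : Prop :=
  (∀ B ∈ π, B.Nonempty) ∧
  (∀ B ∈ π, ∀ C ∈ π, B ≠ C → Disjoint B C) ∧
  (∀ B ∈ π, ∀ C ∈ π, B ≠ C →
    ¬ ∃ i₁ j₁ i₂ j₂ : ℕ, i₁ < j₁ ∧ j₁ < i₂ ∧ i₂ < j₂ ∧
      i₁ ∈ B ∧ i₂ ∈ B ∧ j₁ ∈ C ∧ j₂ ∈ C)

/-- `V` is nested inside `W`. -/
def NestedIn (V W : Finset ℕ) : Prop :=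
  ∃ j ∈ W, ∃ k ∈ W, ∀ x ∈ V, j < x ∧ x < k

/-- `V` is immediately nested inside `W`. -/
def ImmNested (π : Blocks) (V W : Finset ℕ) : Prop :=
  NestedIn V W ∧ ¬ ∃ X ∈ π, NestedIn V X ∧ NestedIn X W

/-- The depth of a block `V` in the nesting tree `graph(π)`. -/
noncomputable def blockDepth (π : Blocks) (V : Finset ℕ) : ℕ :=
  1 + {W : Finset ℕ | W ∈ π ∧ NestedIn V W}.ncard

/-- Number of outer blocks (depth 1, adjacent to the root of the nesting tree). -/
noncomputable def outerCount (π : Blocks) : ℕ :=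
  {V : Finset ℕ | V ∈ π ∧ ¬ ∃ W ∈ π, NestedIn V W}.ncard

/-- Number of inner blocks (depth ≥ 2). -/
noncomputable def innerCount (π : Blocks) : ℕ :=
  {V : Finset ℕ | V ∈ π ∧ ∃ W ∈ π, NestedIn V W}.ncard

/-- A rooted tree homomorphism `graph(π) → T`: it sends the root to the root,
preserves distance to the root, and sends the parent of a block to the parent
(deleting the first letter) of its image. -/
def IsRootedHom {β : Type*} (π : Blocks) (T : Set (List β))
    (φ : {V : Finset ℕ // V ∈ π} → List β) : Prop :=
  (∀ V, φ V ∈ T) ∧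
  (∀ V, (φ V).length = blockDepth π V.1) ∧
  (∀ V W : {V : Finset ℕ // V ∈ π}, ImmNested π V.1 W.1 → (φ V).tail = φ W)



lemma nestedIn_trans {U V W : Finset ℕ} (h1 : NestedIn U V) (h2 : NestedIn V W) :
    NestedIn U W := by
  obtain ⟨j, hj, k, hk, h⟩ := h1
  obtain ⟨j', hj', k', hk', h'⟩ := h2
  exact ⟨j', hj', k', hk', fun x hx => ⟨lt_trans (h' j hj).1 (h x hx).1,
    lt_trans (h x hx).2 (h' k hk).2⟩⟩

lemma nestedIn_irrefl (V : Finset ℕ) : ¬ NestedIn V V := by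
  rintro ⟨j, hj, k, hk, h⟩
  exact lt_irrefl j (h j hj).1

lemma chain_aux {π : Blocks} (hnc : IsNC π) {W₁ W₂ : Finset ℕ}
    (hW₁ : W₁ ∈ π) (hW₂ : W₂ ∈ π) (hne : W₁ ≠ W₂)
    {j₁ k₁ j₂ k₂ x : ℕ} (hj₁ : j₁ ∈ W₁) (hk₁ : k₁ ∈ W₁) (hj₂ : j₂ ∈ W₂) (hk₂ : k₂ ∈ W₂)
    (h21 : j₂ < j₁) (h1x : j₁ < x) (hxk₁ : x < k₁) (hxk₂ : x < k₂) :
    NestedIn W₁ W₂ := by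
  have hdisj := hnc.2.1 W₁ hW₁ W₂ hW₂ hne
  have hcross := hnc.2.2
  have hkk : k₁ < k₂ := by
    rcases lt_trichotomy k₁ k₂ with h | h | h
    · exact h
    · exact absurd (h ▸ hk₁) fun hm => Finset.disjoint_left.mp hdisj (h ▸ hk₁) hk₂ |>.elim
    · exact absurd ⟨j₂, j₁, k₂, k₁, h21, lt_trans h1x hxk₂, h, hj₂, hk₂, hj₁, hk₁⟩
        (hcross W₂ hW₂ W₁ hW₁ hne.symm)
  refine ⟨j₂, hj₂, k₂, hk₂, fun y hy => ⟨?_, ?_⟩⟩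
  · rcases lt_trichotomy j₂ y with h | h | h
    · exact h
    · exact absurd (h ▸ hj₂ : y ∈ W₂) (Finset.disjoint_left.mp hdisj hy)
    · exact absurd ⟨y, j₂, k₁, k₂, h, lt_trans h21 (lt_trans h1x hxk₁), hkk, hy, hk₁, hj₂, hk₂⟩
        (hcross W₁ hW₁ W₂ hW₂ hne)
  · rcases lt_trichotomy y k₂ with h | h | h
    · exact h
    · exact absurd (show y ∈ W₂ by rw [h]; exact hk₂) (Finset.disjoint_left.mp hdisj hy)
    · exact absurd ⟨j₂, j₁, k₂, y, h21, lt_trans h1x hxk₂, h, hj₂, hk₂, hj₁, hy⟩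
        (hcross W₂ hW₂ W₁ hW₁ hne.symm)

lemma nested_chain {π : Blocks} (hnc : IsNC π) {V W₁ W₂ : Finset ℕ}
    (hV : V ∈ π) (hW₁ : W₁ ∈ π) (hW₂ : W₂ ∈ π) (hne : W₁ ≠ W₂)
    (h1 : NestedIn V W₁) (h2 : NestedIn V W₂) :
    NestedIn W₁ W₂ ∨ NestedIn W₂ W₁ := by
  obtain ⟨x, hx⟩ := hnc.1 V hV
  obtain ⟨j₁, hj₁, k₁, hk₁, h1⟩ := h1
  obtain ⟨j₂, hj₂, k₂, hk₂, h2⟩ := h2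
  have hx1 := h1 x hx; have hx2 := h2 x hx
  rcases lt_trichotomy j₁ j₂ with h | h | h
  · exact Or.inr (chain_aux hnc hW₂ hW₁ hne.symm hj₂ hk₂ hj₁ hk₁ h hx2.1 hx2.2 hx1.2)
  · exact absurd hj₁ fun hm => Finset.disjoint_left.mp (hnc.2.1 _ hW₁ _ hW₂ hne) hm (h ▸ hj₂) |>.elim
  · exact Or.inl (chain_aux hnc hW₁ hW₂ hne hj₁ hk₁ hj₂ hk₂ h hx1.1 hx1.2 hx2.2)

def ancSet (π : Blocks) (V : Finset ℕ) : Set (Finset ℕ) := {W | W ∈ π ∧ NestedIn V W}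

lemma ancSet_finite (π : Blocks) (V : Finset ℕ) : (ancSet π V).Finite :=
  Set.Finite.subset π.finite_toSet fun _ h => h.1

lemma blockDepth_def (π : Blocks) (V : Finset ℕ) : blockDepth π V = 1 + (ancSet π V).ncard := rfl

lemma exists_nested_minimal (π : Blocks) (s : Set (Finset ℕ)) (hs : ∀ W ∈ s, W ∈ π)
    (hfin : s.Finite) (hne : s.Nonempty) : ∃ W₀ ∈ s, ∀ X ∈ s, ¬ NestedIn X W₀ := by
  obtain ⟨W₀, hW₀, hmax⟩ := Set.exists_max_image s (fun W => (ancSet π W).ncard) hfin hne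
  refine ⟨W₀, hW₀, fun X hX hnest => ?_⟩
  have hsub : insert W₀ (ancSet π W₀) ⊆ ancSet π X := by
    rintro Y (rfl | hY)
    · exact ⟨hs _ hW₀, hnest⟩
    · exact ⟨hY.1, nestedIn_trans hnest hY.2⟩
  have h1 := Set.ncard_le_ncard hsub (ancSet_finite π X)
  rw [Set.ncard_insert_of_notMem (fun h => nestedIn_irrefl W₀ h.2) (ancSet_finite π W₀)] at h1
  have h2 := hmax X hX
  omega

lemma exists_parent {π : Blocks} (hnc : IsNC π) {V : Finset ℕ} (hV : V ∈ π)
    (hinner : ∃ W ∈ π, NestedIn V W) :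
    ∃ W₀ ∈ π, ImmNested π V W₀ ∧ ancSet π V = insert W₀ (ancSet π W₀) ∧
      (∀ W, ImmNested π V W → W ∈ π → W = W₀) := by
  obtain ⟨W₀, hW₀, hmin⟩ := exists_nested_minimal π (ancSet π V) (fun _ h => h.1)
    (ancSet_finite π V) (by obtain ⟨W, hW, hn⟩ := hinner; exact ⟨W, hW, hn⟩)
  have himm : ImmNested π V W₀ := by
    refine ⟨hW₀.2, ?_⟩
    rintro ⟨Z, hZ, hVZ, hZW⟩
    exact hmin Z ⟨hZ, hVZ⟩ hZW
  refine ⟨W₀, hW₀.1, himm, ?_, ?_⟩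
  · ext X
    constructor
    · intro hX
      rcases eq_or_ne X W₀ with rfl | hne
      · exact Set.mem_insert _ _
      · rcases nested_chain hnc hV hX.1 hW₀.1 hne hX.2 hW₀.2 with h | h
        · exact absurd h (hmin X hX)
        · exact Set.mem_insert_of_mem _ ⟨hX.1, h⟩
    · rintro (rfl | hX)
      · exact hW₀
      · exact ⟨hX.1, nestedIn_trans hW₀.2 hX.2⟩
  · intro W hW hWπ
    by_contra hne
    rcases nested_chain hnc hV hWπ hW₀.1 hne hW.1 hW₀.2 with h | h
    · exact himm.2 ⟨W, hWπ, hW.1, h⟩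
    · exact hW.2 ⟨W₀, hW₀.1, hW₀.2, h⟩

lemma parent_depth {π : Blocks} (hnc : IsNC π) {V W₀ : Finset ℕ}
    (heq : ancSet π V = insert W₀ (ancSet π W₀)) :
    blockDepth π V = blockDepth π W₀ + 1 := by
  rw [blockDepth_def, blockDepth_def, heq,
    Set.ncard_insert_of_notMem (fun h => nestedIn_irrefl W₀ h.2) (ancSet_finite π W₀)]
  omega

-- erase lemmas
lemma erase_nc {π : Blocks} (hnc : IsNC π) (V₀ : Finset ℕ) : IsNC (π.erase V₀) :=
  ⟨fun B hB => hnc.1 B (Finset.mem_of_mem_erase hB),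
   fun B hB C hC h => hnc.2.1 B (Finset.mem_of_mem_erase hB) C (Finset.mem_of_mem_erase hC) h,
   fun B hB C hC h => hnc.2.2 B (Finset.mem_of_mem_erase hB) C (Finset.mem_of_mem_erase hC) h⟩

variable {π : Blocks} {V₀ : Finset ℕ}

lemma ancSet_erase (hleaf : ∀ X ∈ π, ¬ NestedIn X V₀) {V : Finset ℕ} (hV : V ∈ π) : ancSet (π.erase V₀) V = ancSet π V := by
  ext W
  simp only [ancSet, Finset.mem_erase, Set.mem_setOf_eq]
  constructor
  · rintro ⟨⟨_, h1⟩, h2⟩; exact ⟨h1, h2⟩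
  · rintro ⟨h1, h2⟩
    exact ⟨⟨fun he => hleaf V hV (he ▸ h2), h1⟩, h2⟩

lemma blockDepth_erase (hleaf : ∀ X ∈ π, ¬ NestedIn X V₀) {V : Finset ℕ} (hV : V ∈ π) :
    blockDepth (π.erase V₀) V = blockDepth π V := by
  rw [blockDepth_def, blockDepth_def, ancSet_erase hleaf hV]

lemma exists_nested_erase (hleaf : ∀ X ∈ π, ¬ NestedIn X V₀) {V : Finset ℕ} (hV : V ∈ π) :
    (∃ W ∈ π.erase V₀, NestedIn V W) ↔ (∃ W ∈ π, NestedIn V W) := by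
  constructor
  · rintro ⟨W, hW, h⟩; exact ⟨W, Finset.mem_of_mem_erase hW, h⟩
  · rintro ⟨W, hW, h⟩
    exact ⟨W, Finset.mem_erase.mpr ⟨fun he => hleaf V hV (he ▸ h), hW⟩, h⟩

lemma immNested_erase (hleaf : ∀ X ∈ π, ¬ NestedIn X V₀) {V W : Finset ℕ} (hV : V ∈ π) :
    ImmNested (π.erase V₀) V W ↔ ImmNested π V W := by
  unfold ImmNested
  constructor
  · rintro ⟨h1, h2⟩
    refine ⟨h1, ?_⟩
    rintro ⟨Z, hZ, hVZ, hZW⟩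
    exact h2 ⟨Z, Finset.mem_erase.mpr ⟨fun he => hleaf V hV (he ▸ hVZ), hZ⟩, hVZ, hZW⟩
  · rintro ⟨h1, h2⟩
    refine ⟨h1, ?_⟩
    rintro ⟨Z, hZ, hVZ, hZW⟩
    exact h2 ⟨Z, Finset.mem_of_mem_erase hZ, hVZ, hZW⟩


-- counting lemmas
lemma pairs_finite {A B : Type*} (s : Finset A) (F : A → Set B)
    (hfin : ∀ a ∈ s, (F a).Finite) :
    {p : A × B | p.1 ∈ s ∧ p.2 ∈ F p.1}.Finite := by
  apply Set.Finite.subset (Set.Finite.biUnion s.finite_toSet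
    (fun a ha => ((hfin a ha).image (Prod.mk a))))
  rintro ⟨x, y⟩ ⟨hx, hy⟩
  exact Set.mem_biUnion hx ⟨y, hy, rfl⟩

lemma ncard_pairs_fin {A B : Type*} (s : Finset A) (F : A → Set B) (c : ℕ)
    (hfin : ∀ a ∈ s, (F a).Finite) (h : ∀ a ∈ s, (F a).ncard = c) :
    {p : A × B | p.1 ∈ s ∧ p.2 ∈ F p.1}.ncard = s.card * c := by
  classical
  induction s using Finset.induction_on with
  | empty => simp
  | insert _ _ ha IH =>
    rename_i a s
    have hset : {p : A × B | p.1 ∈ insert a s ∧ p.2 ∈ F p.1}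
        = (Prod.mk a '' F a) ∪ {p : A × B | p.1 ∈ s ∧ p.2 ∈ F p.1} := by
      ext ⟨x, y⟩
      simp only [Set.mem_setOf_eq, Finset.mem_insert, Set.mem_union, Set.mem_image]
      constructor
      · rintro ⟨rfl | hx, hy⟩
        · exact Or.inl ⟨y, hy, rfl⟩
        · exact Or.inr ⟨hx, hy⟩
      · rintro (⟨b, hb, heq⟩ | ⟨hx, hy⟩)
        · obtain ⟨rfl, rfl⟩ := Prod.mk.inj heq
          exact ⟨Or.inl rfl, hb⟩
        · exact ⟨Or.inr hx, hy⟩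
    have hdisj : Disjoint (Prod.mk a '' F a) {p : A × B | p.1 ∈ s ∧ p.2 ∈ F p.1} := by
      rw [Set.disjoint_left]
      rintro ⟨x, y⟩ ⟨b, hb, heq⟩ ⟨hx, hy⟩
      obtain ⟨rfl, rfl⟩ := Prod.mk.inj heq
      exact ha hx
    have hinj : Function.Injective (Prod.mk a : B → A × B) := fun b b' hh => by
      simpa using hh
    rw [hset, Set.ncard_union_eq hdisj ((hfin a (Finset.mem_insert_self a s)).image _)
        (pairs_finite s F (fun x hx => hfin x (Finset.mem_insert_of_mem hx))),
      Set.ncard_image_of_injective _ hinj, h a (Finset.mem_insert_self a s),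
      IH (fun x hx => hfin x (Finset.mem_insert_of_mem hx))
        (fun x hx => h x (Finset.mem_insert_of_mem hx)),
      Finset.card_insert_of_notMem ha]
    ring

lemma ncard_pairs {A B : Type*} (S' : Set A) (F : A → Set B) (c : ℕ)
    (h : ∀ a ∈ S', (F a).ncard = c) :
    {p : A × B | p.1 ∈ S' ∧ p.2 ∈ F p.1}.ncard = S'.ncard * c := by
  classical
  by_cases hS : S'.Finite
  · by_cases hF : ∀ a ∈ S', (F a).Finite
    · have key := ncard_pairs_fin hS.toFinset F c
        (fun a ha => hF a (hS.mem_toFinset.mp ha))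
        (fun a ha => h a (hS.mem_toFinset.mp ha))
      have hset : {p : A × B | p.1 ∈ hS.toFinset ∧ p.2 ∈ F p.1}
          = {p : A × B | p.1 ∈ S' ∧ p.2 ∈ F p.1} := by
        ext p; simp [Set.Finite.mem_toFinset]
      rw [hset] at key
      rw [key, Set.ncard_eq_toFinset_card _ hS]
    · push_neg at hF
      obtain ⟨a, ha, hFa⟩ := hF
      have hinf : (F a).Infinite := hFa
      have hc : c = 0 := by rw [← h a ha, hinf.ncard]
      have : {p : A × B | p.1 ∈ S' ∧ p.2 ∈ F p.1}.Infinite := by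
        apply Set.Infinite.mono (s := Prod.mk a '' F a)
        · rintro ⟨x, y⟩ ⟨b, hb, heq⟩
          obtain ⟨rfl, rfl⟩ := Prod.mk.inj heq
          exact ⟨ha, hb⟩
        · exact hinf.image (Set.injOn_of_injective (fun b b' hh => by simpa using hh))
      rw [this.ncard, hc, mul_zero]
  · have h0 : S'.ncard = 0 := (show S'.Infinite from hS).ncard
    rw [h0, zero_mul]
    rcases Set.eq_empty_or_nonempty {p : A × B | p.1 ∈ S' ∧ p.2 ∈ F p.1} with he | hne
    · rw [he, Set.ncard_empty]
    · obtain ⟨⟨a, b⟩, ha, hb⟩ := hne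
      by_cases hc : c = 0
      · have hinf : (F a).Infinite := by
          by_contra hfin
          rw [Set.not_infinite] at hfin
          have := (Set.ncard_eq_zero hfin).mp (by rw [h a ha, hc])
          exact absurd (this ▸ hb) (Set.notMem_empty b)
        have : {p : A × B | p.1 ∈ S' ∧ p.2 ∈ F p.1}.Infinite := by
          apply Set.Infinite.mono (s := Prod.mk a '' F a)
          · rintro ⟨x, y⟩ ⟨b', hb', heq⟩
            obtain ⟨rfl, rfl⟩ := Prod.mk.inj heq
            exact ⟨ha, hb'⟩
          · exact hinf.image (Set.injOn_of_injective (fun u v hh => by simpa using hh))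
        exact this.ncard
      · have hnonempty : ∀ a' ∈ S', (F a').Nonempty := fun a' ha' =>
          Set.nonempty_of_ncard_ne_zero (by rw [h a' ha']; exact hc)
        set g : A → B := fun a' => if hh : (F a').Nonempty then hh.some else b with hg
        have : {p : A × B | p.1 ∈ S' ∧ p.2 ∈ F p.1}.Infinite := by
          apply Set.Infinite.mono (s := (fun a' => (a', g a')) '' S')
          · rintro ⟨x, y⟩ ⟨a', ha', heq⟩
            obtain ⟨rfl, rfl⟩ := Prod.mk.inj heq
            have hne' := hnonempty a' ha'
            refine ⟨ha', ?_⟩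
            simp only [hg, dif_pos hne']
            exact hne'.some_mem
          · exact (show S'.Infinite from hS).image
              (Set.injOn_of_injective (fun u v hh => by simpa using congrArg Prod.fst hh))
        exact this.ncard

def eraseEquiv {β : Type*} {π : Blocks} {V₀ : Finset ℕ} (h₀ : V₀ ∈ π) :
    ({V : Finset ℕ // V ∈ π} → List β) ≃
      (({V : Finset ℕ // V ∈ π.erase V₀} → List β) × List β) where
  toFun φ := (fun V => φ ⟨V.1, Finset.mem_of_mem_erase V.2⟩, φ ⟨V₀, h₀⟩)
  invFun p V := if h : V.1 = V₀ then p.2 else p.1 ⟨V.1, Finset.mem_erase.mpr ⟨h, V.2⟩⟩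
  left_inv φ := by
    funext V
    by_cases h : V.1 = V₀
    · simp only [dif_pos h]
      congr 1
      exact Subtype.ext h.symm
    · simp only [dif_neg h]
  right_inv p := by
    refine Prod.ext ?_ ?_
    · funext V
      simp only [dif_neg (Finset.ne_of_mem_erase V.2)]
    · simp

lemma symm_apply_ne {β : Type*} {π : Blocks} {V₀ : Finset ℕ} (h₀ : V₀ ∈ π)
    (p : ({V : Finset ℕ // V ∈ π.erase V₀} → List β) × List β)
    {W : Finset ℕ} (hW : W ∈ π.erase V₀) :
    (eraseEquiv h₀).symm p ⟨W, Finset.mem_of_mem_erase hW⟩ = p.1 ⟨W, hW⟩ := by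
  simp only [eraseEquiv, Equiv.coe_fn_symm_mk, dif_neg (Finset.ne_of_mem_erase hW)]

lemma symm_apply_v0 {β : Type*} {π : Blocks} {V₀ : Finset ℕ} (h₀ : V₀ ∈ π)
    (p : ({V : Finset ℕ // V ∈ π.erase V₀} → List β) × List β) :
    (eraseEquiv h₀).symm p ⟨V₀, h₀⟩ = p.2 := by
  simp only [eraseEquiv, Equiv.coe_fn_symm_mk]
  exact dif_pos trivial

lemma depth_outer {π : Blocks} {V₀ : Finset ℕ}
    (houter : ¬ ∃ W ∈ π, NestedIn V₀ W) : blockDepth π V₀ = 1 := by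
  rw [blockDepth_def]
  have : ancSet π V₀ = ∅ := by
    ext W
    simp only [ancSet, Set.mem_setOf_eq, Set.mem_empty_iff_false, iff_false]
    rintro ⟨h1, h2⟩
    exact houter ⟨W, h1, h2⟩
  rw [this, Set.ncard_empty]

lemma hom_iff_outer {β : Type*} {π : Blocks} {V₀ : Finset ℕ} (T : Set (List β))
    (h₀ : V₀ ∈ π) (hleaf : ∀ X ∈ π, ¬ NestedIn X V₀)
    (houter : ¬ ∃ W ∈ π, NestedIn V₀ W)
    (φ : {V : Finset ℕ // V ∈ π} → List β) :
    IsRootedHom π T φ ↔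
      (IsRootedHom (π.erase V₀) T
          (fun V => φ ⟨V.1, Finset.mem_of_mem_erase V.2⟩) ∧
        φ ⟨V₀, h₀⟩ ∈ T ∧ (φ ⟨V₀, h₀⟩).length = 1) := by
  constructor
  · intro h
    refine ⟨⟨fun V => h.1 _, fun V => ?_, fun V W himm => ?_⟩, h.1 _, ?_⟩
    · rw [h.2.1 ⟨V.1, Finset.mem_of_mem_erase V.2⟩,
        blockDepth_erase hleaf (Finset.mem_of_mem_erase V.2)]
    · exact h.2.2 ⟨V.1, Finset.mem_of_mem_erase V.2⟩ ⟨W.1, Finset.mem_of_mem_erase W.2⟩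
        ((immNested_erase hleaf (Finset.mem_of_mem_erase V.2)).mp himm)
    · rw [h.2.1 ⟨V₀, h₀⟩, depth_outer houter]
  · rintro ⟨h', hT₀, hlen⟩
    have hval : ∀ (V : {V : Finset ℕ // V ∈ π}) (h : V.1 ≠ V₀),
        φ V = φ ⟨(⟨V.1, Finset.mem_erase.mpr ⟨h, V.2⟩⟩ : {V : Finset ℕ // V ∈ π.erase V₀}).1,
          Finset.mem_of_mem_erase (Finset.mem_erase.mpr ⟨h, V.2⟩)⟩ := fun V h => rfl
    refine ⟨fun V => ?_, fun V => ?_, fun V W himm => ?_⟩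
    · by_cases h : V.1 = V₀
      · have : V = ⟨V₀, h₀⟩ := Subtype.ext h
        rw [this]; exact hT₀
      · exact h'.1 ⟨V.1, Finset.mem_erase.mpr ⟨h, V.2⟩⟩
    · by_cases h : V.1 = V₀
      · have hV : V = ⟨V₀, h₀⟩ := Subtype.ext h
        rw [hV, hlen]; exact (depth_outer houter).symm
      · have := h'.2.1 ⟨V.1, Finset.mem_erase.mpr ⟨h, V.2⟩⟩
        rwa [blockDepth_erase hleaf V.2] at this
    · by_cases hW : W.1 = V₀
      · exact absurd (hW ▸ himm.1) (hleaf V.1 V.2)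
      · by_cases hV : V.1 = V₀
        · exact absurd ⟨W.1, W.2, hV ▸ himm.1⟩ houter
        · exact h'.2.2 ⟨V.1, Finset.mem_erase.mpr ⟨hV, V.2⟩⟩
            ⟨W.1, Finset.mem_erase.mpr ⟨hW, W.2⟩⟩
            ((immNested_erase hleaf V.2).mpr himm)

lemma hom_iff_inner {β : Type*} {π : Blocks} {V₀ W₀ : Finset ℕ} (T : Set (List β))
    (h₀ : V₀ ∈ π) (hleaf : ∀ X ∈ π, ¬ NestedIn X V₀)
    (hW₀ : W₀ ∈ π) (himmp : ImmNested π V₀ W₀)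
    (huniq : ∀ W, ImmNested π V₀ W → W ∈ π → W = W₀)
    (φ : {V : Finset ℕ // V ∈ π} → List β) :
    IsRootedHom π T φ ↔
      (IsRootedHom (π.erase V₀) T
          (fun V => φ ⟨V.1, Finset.mem_of_mem_erase V.2⟩) ∧
        φ ⟨V₀, h₀⟩ ∈ T ∧ (φ ⟨V₀, h₀⟩).length = blockDepth π V₀ ∧
          (φ ⟨V₀, h₀⟩).tail = φ ⟨W₀, hW₀⟩) := by
  constructor
  · intro h
    refine ⟨⟨fun V => h.1 _, fun V => ?_, fun V W himm => ?_⟩, h.1 _, h.2.1 _, ?_⟩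
    · rw [h.2.1 ⟨V.1, Finset.mem_of_mem_erase V.2⟩,
        blockDepth_erase hleaf (Finset.mem_of_mem_erase V.2)]
    · exact h.2.2 ⟨V.1, Finset.mem_of_mem_erase V.2⟩ ⟨W.1, Finset.mem_of_mem_erase W.2⟩
        ((immNested_erase hleaf (Finset.mem_of_mem_erase V.2)).mp himm)
    · exact h.2.2 ⟨V₀, h₀⟩ ⟨W₀, hW₀⟩ himmp
  · rintro ⟨h', hT₀, hlen, htail⟩
    refine ⟨fun V => ?_, fun V => ?_, fun V W himm => ?_⟩
    · by_cases h : V.1 = V₀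
      · have : V = ⟨V₀, h₀⟩ := Subtype.ext h
        rw [this]; exact hT₀
      · exact h'.1 ⟨V.1, Finset.mem_erase.mpr ⟨h, V.2⟩⟩
    · by_cases h : V.1 = V₀
      · have hV : V = ⟨V₀, h₀⟩ := Subtype.ext h
        rw [hV, hlen]
      · have := h'.2.1 ⟨V.1, Finset.mem_erase.mpr ⟨h, V.2⟩⟩
        rwa [blockDepth_erase hleaf V.2] at this
    · by_cases hW : W.1 = V₀
      · exact absurd (hW ▸ himm.1) (hleaf V.1 V.2)
      · by_cases hV : V.1 = V₀
        · have hVeq : V = ⟨V₀, h₀⟩ := Subtype.ext hV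
          have hWeq : W.1 = W₀ := huniq W.1 (hV ▸ himm) W.2
          have hWeq' : W = ⟨W₀, hW₀⟩ := Subtype.ext hWeq
          rw [hVeq, hWeq', htail]
        · exact h'.2.2 ⟨V.1, Finset.mem_erase.mpr ⟨hV, V.2⟩⟩
            ⟨W.1, Finset.mem_erase.mpr ⟨hW, W.2⟩⟩
            ((immNested_erase hleaf V.2).mpr himm)

def OSet (π : Blocks) : Set (Finset ℕ) := {V | V ∈ π ∧ ¬ ∃ W ∈ π, NestedIn V W}
def ISet (π : Blocks) : Set (Finset ℕ) := {V | V ∈ π ∧ ∃ W ∈ π, NestedIn V W}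

lemma OSet_finite (π : Blocks) : (OSet π).Finite :=
  Set.Finite.subset π.finite_toSet fun _ h => h.1
lemma ISet_finite (π : Blocks) : (ISet π).Finite :=
  Set.Finite.subset π.finite_toSet fun _ h => h.1

lemma OSet_erase {π : Blocks} {V₀ : Finset ℕ} (hleaf : ∀ X ∈ π, ¬ NestedIn X V₀) :
    OSet (π.erase V₀) = OSet π \ {V₀} := by
  ext V
  simp only [OSet, Set.mem_setOf_eq, Set.mem_diff, Set.mem_singleton_iff]
  constructor
  · rintro ⟨hV', h2⟩
    have hV := Finset.mem_of_mem_erase hV'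
    exact ⟨⟨hV, fun he => h2 ((exists_nested_erase hleaf hV).mpr he)⟩,
      Finset.ne_of_mem_erase hV'⟩
  · rintro ⟨⟨hV, h2⟩, hne⟩
    exact ⟨Finset.mem_erase.mpr ⟨hne, hV⟩,
      fun he => h2 ((exists_nested_erase hleaf hV).mp he)⟩

lemma ISet_erase {π : Blocks} {V₀ : Finset ℕ} (hleaf : ∀ X ∈ π, ¬ NestedIn X V₀) :
    ISet (π.erase V₀) = ISet π \ {V₀} := by
  ext V
  simp only [ISet, Set.mem_setOf_eq, Set.mem_diff, Set.mem_singleton_iff]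
  constructor
  · rintro ⟨hV', h2⟩
    have hV := Finset.mem_of_mem_erase hV'
    exact ⟨⟨hV, (exists_nested_erase hleaf hV).mp h2⟩, Finset.ne_of_mem_erase hV'⟩
  · rintro ⟨⟨hV, h2⟩, hne⟩
    exact ⟨Finset.mem_erase.mpr ⟨hne, hV⟩, (exists_nested_erase hleaf hV).mpr h2⟩

lemma hom_empty {β : Type*} (T : Set (List β)) :
    {φ : {V : Finset ℕ // V ∈ (∅ : Blocks)} → List β | IsRootedHom ∅ T φ}.ncard = 1 := by
  haveI : IsEmpty {V : Finset ℕ // V ∈ (∅ : Blocks)} :=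
    ⟨fun V => absurd V.2 (Finset.notMem_empty _)⟩
  have h : {φ : {V : Finset ℕ // V ∈ (∅ : Blocks)} → List β | IsRootedHom ∅ T φ}
      = Set.univ := by
    ext φ
    simp only [Set.mem_setOf_eq, Set.mem_univ, iff_true]
    exact ⟨fun V => isEmptyElim V, fun V => isEmptyElim V, fun V _ _ => isEmptyElim V⟩
  rw [h, Set.ncard_univ]
  exact Nat.card_unique

lemma outerCount_empty : outerCount (∅ : Blocks) = 0 := by
  unfold outerCount
  convert Set.ncard_empty (Finset ℕ) using 2
  ext V; simp

lemma innerCount_empty : innerCount (∅ : Blocks) = 0 := by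
  unfold innerCount
  convert Set.ncard_empty (Finset ℕ) using 2
  ext V; simp

lemma fiber_len_one {β : Type*} (T : Set (List β)) :
    {s : List β | s ∈ T ∧ s.length = 1} = (fun j => [j]) '' {j : β | [j] ∈ T} := by
  ext s
  constructor
  · rintro ⟨h1, h2⟩
    obtain ⟨a, rfl⟩ := List.length_eq_one_iff.mp h2
    exact ⟨a, h1, rfl⟩
  · rintro ⟨a, ha, rfl⟩
    exact ⟨ha, rfl⟩

lemma fiber_cons {β : Type*} (T : Set (List β)) (t : List β) (m : ℕ) (hm : m = t.length + 1) :
    {s : List β | s ∈ T ∧ s.length = m ∧ s.tail = t}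
      = (fun j => j :: t) '' {j : β | j :: t ∈ T} := by
  ext s
  constructor
  · rintro ⟨h1, h2, h3⟩
    cases s with
    | nil => rw [hm] at h2; simp at h2
    | cons a l =>
      simp only [List.tail_cons] at h3
      subst h3
      exact ⟨a, h1, rfl⟩
  · rintro ⟨a, ha, rfl⟩
    exact ⟨ha, by simp [hm], rfl⟩

lemma main_aux {β : Type*} (T : Set (List β)) (n d : ℕ)
    (hroot : {j : β | [j] ∈ T}.ncard = n)
    (hreg : ∀ s ∈ T, s ≠ [] → {j : β | j :: s ∈ T}.ncard = d) :
    ∀ N (π : Blocks), π.card ≤ N → IsNC π →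
      {φ : {V : Finset ℕ // V ∈ π} → List β | IsRootedHom π T φ}.ncard
        = n ^ outerCount π * d ^ innerCount π := by
  intro N
  induction N with
  | zero =>
    intro π hcard _
    have h : π = ∅ := Finset.card_eq_zero.mp (Nat.le_zero.mp hcard)
    subst h
    rw [hom_empty, outerCount_empty, innerCount_empty]
    simp
  | succ N IH =>
    intro π hcard hnc
    by_cases hemp : π = ∅
    · subst hemp
      rw [hom_empty, outerCount_empty, innerCount_empty]
      simp
    · obtain ⟨V₀, h₀, hleaf'⟩ := exists_nested_minimal π (↑π) (fun _ h => h) π.finite_toSet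
        (Finset.coe_nonempty.mpr (Finset.nonempty_iff_ne_empty.mpr hemp))
    -- continue
      have h₀ : V₀ ∈ π := h₀
      have hleaf : ∀ X ∈ π, ¬ NestedIn X V₀ := fun X hX => hleaf' X hX
      have hcard' : (π.erase V₀).card ≤ N := by
        rw [Finset.card_erase_of_mem h₀]
        have := Finset.card_pos.mpr (Finset.nonempty_iff_ne_empty.mpr hemp)
        omega
      have hIH := IH (π.erase V₀) hcard' (erase_nc hnc V₀)
      rw [← Set.ncard_image_of_injective _ (Equiv.injective (eraseEquiv (β := β) h₀))]
      by_cases hout : ∃ W ∈ π, NestedIn V₀ W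
      · -- V₀ is an inner block
        obtain ⟨W₀, hW₀, himmp, hancEq, huniq⟩ := exists_parent hnc h₀ hout
        have hW₀ne : W₀ ≠ V₀ := fun he => nestedIn_irrefl V₀ (he ▸ himmp.1)
        have hW₀' : W₀ ∈ π.erase V₀ := Finset.mem_erase.mpr ⟨hW₀ne, hW₀⟩
        have hdepth := parent_depth hnc hancEq
        set F : ({V : Finset ℕ // V ∈ π.erase V₀} → List β) → Set (List β) :=
          fun ψ => {s | s ∈ T ∧ s.length = blockDepth π V₀ ∧ s.tail = ψ ⟨W₀, hW₀'⟩} with hF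
        have himg : (eraseEquiv (β := β) h₀) '' {φ | IsRootedHom π T φ}
            = {p : ({V : Finset ℕ // V ∈ π.erase V₀} → List β) × List β |
                p.1 ∈ {ψ | IsRootedHom (π.erase V₀) T ψ} ∧
                p.2 ∈ F p.1} := by
          rw [Equiv.image_eq_preimage_symm]
          ext p
          simp only [Set.mem_preimage, Set.mem_setOf_eq]
          rw [hom_iff_inner T h₀ hleaf hW₀ himmp huniq]
          have e1 : (fun (V : {V : Finset ℕ // V ∈ π.erase V₀}) =>
              (eraseEquiv (β := β) h₀).symm p ⟨V.1, Finset.mem_of_mem_erase V.2⟩) = p.1 := by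
            funext V; exact symm_apply_ne h₀ p V.2
          rw [e1, symm_apply_v0 h₀ p, symm_apply_ne h₀ p hW₀']
          simp only [hF, Set.mem_setOf_eq]
        rw [himg, ncard_pairs _ F d ?_, hIH]
        · -- arithmetic with counts
          have hVin : V₀ ∈ ISet π := ⟨h₀, hout⟩
          have hVout : V₀ ∉ OSet π := fun h => h.2 hout
          have hI : innerCount π = innerCount (π.erase V₀) + 1 := by
            show (ISet π).ncard = (ISet (π.erase V₀)).ncard + 1
            rw [ISet_erase hleaf,
              Set.ncard_diff_singleton_add_one hVin (ISet_finite π)]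
          have hO : outerCount π = outerCount (π.erase V₀) := by
            show (OSet π).ncard = (OSet (π.erase V₀)).ncard
            rw [OSet_erase hleaf, Set.diff_singleton_eq_self hVout]
          rw [hI, hO, pow_succ]
          ring
        · intro ψ hψ
          have ht : ψ ⟨W₀, hW₀'⟩ ∈ T := hψ.1 _
          have htlen : (ψ ⟨W₀, hW₀'⟩).length = blockDepth π W₀ := by
            rw [hψ.2.1 ⟨W₀, hW₀'⟩, blockDepth_erase hleaf hW₀]
          have htne : ψ ⟨W₀, hW₀'⟩ ≠ [] := by
            intro he
            rw [he, blockDepth_def] at htlen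
            simp only [List.length_nil] at htlen
            omega
          simp only [hF]
          rw [fiber_cons T _ _ (by rw [htlen]; exact hdepth),
            Set.ncard_image_of_injective _ (fun a b hh => by simpa using hh),
            hreg _ ht htne]
      · -- V₀ is an outer block
        set F : ({V : Finset ℕ // V ∈ π.erase V₀} → List β) → Set (List β) :=
          fun _ => {s | s ∈ T ∧ s.length = 1} with hF
        have himg : (eraseEquiv (β := β) h₀) '' {φ | IsRootedHom π T φ}
            = {p : ({V : Finset ℕ // V ∈ π.erase V₀} → List β) × List β |
                p.1 ∈ {ψ | IsRootedHom (π.erase V₀) T ψ} ∧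
                p.2 ∈ F p.1} := by
          rw [Equiv.image_eq_preimage_symm]
          ext p
          simp only [Set.mem_preimage, Set.mem_setOf_eq]
          rw [hom_iff_outer T h₀ hleaf hout]
          have e1 : (fun (V : {V : Finset ℕ // V ∈ π.erase V₀}) =>
              (eraseEquiv (β := β) h₀).symm p ⟨V.1, Finset.mem_of_mem_erase V.2⟩) = p.1 := by
            funext V; exact symm_apply_ne h₀ p V.2
          rw [e1, symm_apply_v0 h₀ p]
          simp only [hF, Set.mem_setOf_eq]
        rw [himg, ncard_pairs _ F n ?_, hIH]
        · have hVin : V₀ ∈ OSet π := ⟨h₀, hout⟩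
          have hVout : V₀ ∉ ISet π := fun h => hout h.2
          have hO : outerCount π = outerCount (π.erase V₀) + 1 := by
            show (OSet π).ncard = (OSet (π.erase V₀)).ncard + 1
            rw [OSet_erase hleaf,
              Set.ncard_diff_singleton_add_one hVin (OSet_finite π)]
          have hI : innerCount π = innerCount (π.erase V₀) := by
            show (ISet π).ncard = (ISet (π.erase V₀)).ncard
            rw [ISet_erase hleaf, Set.diff_singleton_eq_self hVout]
          rw [hI, hO, pow_succ]
          ring
        · intro ψ _
          simp only [hF]
          rw [fiber_len_one T,
            Set.ncard_image_of_injective _ (fun a b hh => by simpa using hh),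
            hroot]


/-- For an `(n,d)`-regular rooted tree `T` (the root has exactly `n` children and
every other vertex exactly `d` children) and a non-crossing partition `π`, the
number of rooted tree homomorphisms `graph(π) → T` is `n^{O(π)} · d^{I(π)}`. -/
theorem stmt8 {β : Type*} (T : Set (List β)) (hT : IsRootedSubtree T) (n d : ℕ)
    (hroot : {j : β | [j] ∈ T}.ncard = n)
    (hreg : ∀ s ∈ T, s ≠ [] → {j : β | j :: s ∈ T}.ncard = d)
    (π : Blocks) (hnc : IsNC π) :
    {φ : {V : Finset ℕ // V ∈ π} → List β | IsRootedHom π T φ}.ncard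
      = n ^ outerCount π * d ^ innerCount π :=
  main_aux T n d hroot hreg π.card π le_rfl hnc
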